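/- Unitality transfer: let M ⊆ B(H', K') be a TRO such that the identity I_{K'} lies in the closure of span(M M*) via a net I_{K'} = lim_λ Σ_i m_i^λ (m_i^λ)*. Let D = closure(span(M* M)) and suppose ψ: B(H') ⊇ Y → B(H) is as in the bimodule setup with ψ(I_{H'}) given, and construct K = M ⊗_D H with the induced inner product ⟨m ⊗ ξ, n ⊗ ω⟩ = ⟨π(n* m) ξ, ω⟩. Then the induced map φ with φ(m s n*)(l ⊗ ξ) = m ⊗ ψ(s n* l)(ξ) sends I_{K'} to I_K, i.e., φ is unital. -/

import Mathlib

open ContinuousLinearMap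

noncomputable section

/-- Norm closure of the linear span of a set. -/
def csp {E : Type*} [NormedAddCommGroup E] [NormedSpace ℂ E] (S : Set E) : Set E :=
  closure (Submodule.span ℂ S : Set E)

set_option maxHeartbeats 1000000 in
/-- Unitality transfer: let `M ⊆ B(H',K')` be a TRO with
`I_{K'} = lim_λ Σ_i m_i^λ (m_i^λ)*`, `D = closure span (M* M)`, `π` a *-homomorphism of
`D` into `B(H)`, and let `K₀` realise the Hilbert space `M ⊗_D H` via a bilinear map
`θ(m, ξ) = m ⊗ ξ` with `⟨m ⊗ ξ, n ⊗ ω⟩ = ⟨π(n* m) ξ, ω⟩` and total range. If the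
induced map `φ` satisfies `φ(m n*)(l ⊗ ξ) = m ⊗ π(n* l) ξ`, then `φ` is unital:
`φ(I_{K'}) = I_{K₀}`. -/
theorem stmt15 {H' K' H K₀ : Type*}
    [NormedAddCommGroup H'] [InnerProductSpace ℂ H'] [CompleteSpace H']
    [NormedAddCommGroup K'] [InnerProductSpace ℂ K'] [CompleteSpace K']
    [NormedAddCommGroup H] [InnerProductSpace ℂ H] [CompleteSpace H]
    [NormedAddCommGroup K₀] [InnerProductSpace ℂ K₀] [CompleteSpace K₀]
    (M : Submodule ℂ (H' →L[ℂ] K')) (hMclosed : IsClosed (M : Set (H' →L[ℂ] K')))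
    (hTRO : ∀ m ∈ M, ∀ n ∈ M, ∀ l ∈ M, m ∘L (adjoint n) ∘L l ∈ M)
    (π : (H' →L[ℂ] H') →ₗ[ℂ] (H →L[ℂ] H))
    (hπmul : ∀ S ∈ csp {T : H' →L[ℂ] H' | ∃ m ∈ M, ∃ n ∈ M, T = (adjoint m) ∘L n},
      ∀ T ∈ csp {T : H' →L[ℂ] H' | ∃ m ∈ M, ∃ n ∈ M, T = (adjoint m) ∘L n},
        π (S ∘L T) = (π S) ∘L (π T))
    (hπstar : ∀ S ∈ csp {T : H' →L[ℂ] H' | ∃ m ∈ M, ∃ n ∈ M, T = (adjoint m) ∘L n},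
      π (adjoint S) = adjoint (π S))
    (hπcontr : ∀ S ∈ csp {T : H' →L[ℂ] H' | ∃ m ∈ M, ∃ n ∈ M, T = (adjoint m) ∘L n},
      ‖π S‖ ≤ ‖S‖)
    -- `θ m ξ` plays the role of the elementary tensor `m ⊗ ξ ∈ K₀ = M ⊗_D H`
    (θ : (H' →L[ℂ] K') →ₗ[ℂ] H →ₗ[ℂ] K₀)
    (hθbound : ∀ (T : H' →L[ℂ] K') (ξ : H), ‖θ T ξ‖ ≤ ‖T‖ * ‖ξ‖)
    (hinner : ∀ m ∈ M, ∀ n ∈ M, ∀ (ξ ω : H),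
      (inner ℂ (θ m ξ) (θ n ω) : ℂ) = inner ℂ (π ((adjoint n) ∘L m) ξ) ω)
    (htotal : csp {v : K₀ | ∃ l ∈ M, ∃ ξ : H, v = θ l ξ} = Set.univ)
    (φ : (K' →L[ℂ] K') →L[ℂ] (K₀ →L[ℂ] K₀))
    (hφ : ∀ m ∈ M, ∀ n ∈ M, ∀ l ∈ M, ∀ ξ : H,
      (φ (m ∘L (adjoint n))) (θ l ξ) = θ m (π ((adjoint n) ∘L l) ξ))
    {ι : Type*} (F : Filter ι) [F.NeBot] (f : ι → (K' →L[ℂ] K'))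
    (hf : ∀ i, f i ∈ AddSubmonoid.closure {T : K' →L[ℂ] K' | ∃ m ∈ M, T = m ∘L (adjoint m)})
    (hfI : Filter.Tendsto f F (nhds (ContinuousLinearMap.id ℂ K'))) :
    φ (ContinuousLinearMap.id ℂ K') = ContinuousLinearMap.id ℂ K₀ := by

  classical
  set G : Set (H' →L[ℂ] H') :=
    {T : H' →L[ℂ] H' | ∃ m ∈ M, ∃ n ∈ M, T = (adjoint m) ∘L n} with hG
  have hgen : ∀ m ∈ M, ∀ n ∈ M, (adjoint m) ∘L n ∈ csp G := fun m hm n hn =>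
    subset_closure (Submodule.subset_span ⟨m, hm, n, hn, rfl⟩)
  -- a vector orthogonal to all elementary tensors is zero
  have hzero : ∀ x : K₀, (∀ l ∈ M, ∀ ξ : H, (inner ℂ x (θ l ξ) : ℂ) = 0) → x = 0 := by
    intro x hx
    have h1 : {v : K₀ | ∃ l ∈ M, ∃ ξ : H, v = θ l ξ} ⊆
        (LinearMap.ker (innerSL ℂ x : K₀ →ₗ[ℂ] ℂ) : Set K₀) := by
      rintro v ⟨l, hl, ξ, rfl⟩
      simp only [SetLike.mem_coe, LinearMap.mem_ker, ContinuousLinearMap.coe_coe,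
        innerSL_apply_apply]
      exact hx l hl ξ
    have h3 : csp {v : K₀ | ∃ l ∈ M, ∃ ξ : H, v = θ l ξ} ⊆
        (LinearMap.ker (innerSL ℂ x : K₀ →ₗ[ℂ] ℂ) : Set K₀) :=
      closure_minimal (Submodule.span_le.mpr h1)
        (ContinuousLinearMap.isClosed_ker (innerSL ℂ x))
    have hmem := h3 (htotal ▸ Set.mem_univ x)
    simp only [SetLike.mem_coe, LinearMap.mem_ker, ContinuousLinearMap.coe_coe,
      innerSL_apply_apply] at hmem
    exact inner_self_eq_zero.mp hmem
  -- balancedness: m ⊗ π(n* l) ξ = (m n* l) ⊗ ξ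
  have hbal : ∀ m ∈ M, ∀ n ∈ M, ∀ l ∈ M, ∀ ξ : H,
      θ m (π ((adjoint n) ∘L l) ξ) = θ (m ∘L (adjoint n) ∘L l) ξ := by
    intro m hm n hn l hl ξ
    have h := hzero (θ m (π ((adjoint n) ∘L l) ξ) - θ (m ∘L (adjoint n) ∘L l) ξ) ?_
    · exact sub_eq_zero.mp h
    · intro n' hn' ω
      rw [inner_sub_left, hinner m hm n' hn' _ ω,
        hinner _ (hTRO m hm n hn l hl) n' hn' ξ ω]
      have hmul := hπmul _ (hgen n' hn' m hm) _ (hgen n hn l hl)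
      have hassoc : (adjoint n' ∘L m) ∘L (adjoint n ∘L l)
          = adjoint n' ∘L (m ∘L (adjoint n ∘L l)) := by
        simp [ContinuousLinearMap.comp_assoc]
      rw [hassoc] at hmul
      rw [hmul]
      simp
  -- action of φ on elements of the additive closure
  have hkey : ∀ T ∈ AddSubmonoid.closure
      {T : K' →L[ℂ] K' | ∃ m ∈ M, T = m ∘L (adjoint m)},
      ∀ l ∈ M, ∀ ξ : H, φ T (θ l ξ) = θ (T ∘L l) ξ := by
    intro T hT
    induction hT using AddSubmonoid.closure_induction with
    | mem T hT =>
      obtain ⟨m, hm, rfl⟩ := hT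
      intro l hl ξ
      rw [hφ m hm m hm l hl ξ, hbal m hm m hm l hl ξ,
        ContinuousLinearMap.comp_assoc]
    | zero =>
      intro l hl ξ
      simp
    | add a b _ _ ha hb =>
      intro l hl ξ
      rw [map_add, ContinuousLinearMap.add_apply, ha l hl ξ, hb l hl ξ,
        ContinuousLinearMap.add_comp, map_add]
      rfl
  -- φ(I) fixes elementary tensors
  have hfix : ∀ l ∈ M, ∀ ξ : H,
      φ (ContinuousLinearMap.id ℂ K') (θ l ξ) = θ l ξ := by
    intro l hl ξ
    have h1 : Filter.Tendsto (fun i => φ (f i) (θ l ξ)) F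
        (nhds (φ (ContinuousLinearMap.id ℂ K') (θ l ξ))) := by
      have hc : Continuous fun T : K' →L[ℂ] K' => φ T (θ l ξ) :=
        ((ContinuousLinearMap.apply ℂ K₀ (θ l ξ)).comp φ).continuous
      exact (hc.tendsto _).comp hfI
    have h2 : Filter.Tendsto (fun i => φ (f i) (θ l ξ)) F (nhds (θ l ξ)) := by
      have heq : ∀ i, φ (f i) (θ l ξ) = θ (f i ∘L l) ξ := fun i =>
        hkey (f i) (hf i) l hl ξ
      simp only [heq]
      rw [tendsto_iff_norm_sub_tendsto_zero]
      have hb : ∀ i, ‖θ (f i ∘L l) ξ - θ l ξ‖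
          ≤ ‖f i - ContinuousLinearMap.id ℂ K'‖ * ‖l‖ * ‖ξ‖ := by
        intro i
        have : θ (f i ∘L l) ξ - θ l ξ = θ (f i ∘L l - l) ξ := by
          rw [map_sub, LinearMap.sub_apply]
        rw [this]
        calc ‖θ (f i ∘L l - l) ξ‖ ≤ ‖f i ∘L l - l‖ * ‖ξ‖ := hθbound _ _
          _ ≤ ‖f i - ContinuousLinearMap.id ℂ K'‖ * ‖l‖ * ‖ξ‖ := by
            have : f i ∘L l - l = (f i - ContinuousLinearMap.id ℂ K') ∘L l := by
              rw [ContinuousLinearMap.sub_comp, ContinuousLinearMap.id_comp]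
            rw [this]
            exact mul_le_mul_of_nonneg_right (ContinuousLinearMap.opNorm_comp_le _ _)
              (norm_nonneg ξ)
      have hlim : Filter.Tendsto
          (fun i => ‖f i - ContinuousLinearMap.id ℂ K'‖ * ‖l‖ * ‖ξ‖) F (nhds 0) := by
        have hn : Filter.Tendsto (fun i => ‖f i - ContinuousLinearMap.id ℂ K'‖) F
            (nhds 0) := tendsto_iff_norm_sub_tendsto_zero.mp hfI
        simpa using (hn.mul_const ‖l‖).mul_const ‖ξ‖
      exact squeeze_zero (fun i => norm_nonneg _) hb hlim
    exact tendsto_nhds_unique h1 h2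
  -- conclude by totality
  have hdiff : ∀ v : K₀,
      (φ (ContinuousLinearMap.id ℂ K') - ContinuousLinearMap.id ℂ K₀) v = 0 := by
    intro v
    set Ψ := φ (ContinuousLinearMap.id ℂ K') - ContinuousLinearMap.id ℂ K₀ with hΨ
    have h1 : {v : K₀ | ∃ l ∈ M, ∃ ξ : H, v = θ l ξ} ⊆
        (LinearMap.ker (Ψ : K₀ →ₗ[ℂ] K₀) : Set K₀) := by
      rintro w ⟨l, hl, ξ, rfl⟩
      have : Ψ (θ l ξ) = 0 := by
        rw [hΨ, ContinuousLinearMap.sub_apply, hfix l hl ξ]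
        simp
      exact this
    have h3 : csp {v : K₀ | ∃ l ∈ M, ∃ ξ : H, v = θ l ξ} ⊆
        (LinearMap.ker (Ψ : K₀ →ₗ[ℂ] K₀) : Set K₀) :=
      closure_minimal (Submodule.span_le.mpr h1) (ContinuousLinearMap.isClosed_ker Ψ)
    exact h3 (htotal ▸ Set.mem_univ v)
  ext v
  have := hdiff v
  rw [ContinuousLinearMap.sub_apply, sub_eq_zero] at this
  simpa using this
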